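/- Let u : ℝ → ℝ be a nonconstant, concave, increasing function and let u_0 ∈ ℝ satisfy u(x) > u_0 for some x ∈ ℝ. Define ρ_u : L^∞ → [−∞,∞] by ρ_u(X) := inf{m ∈ ℝ : E[u(X+m)] ≥ u_0}. Then ρ_u is convex and lower semicontinuous with respect to the weak topology σ(L^∞,L^1), and for every X ∈ L^∞, ρ_u(X) = sup over probability measures Q absolutely continuous with respect to P of { E_Q[−X] + sup_{λ>0} (1/λ)·( u_0 + E[ u•(λ · dQ/dP) ] ) }, where u•(z) := inf_{x ∈ ℝ} (xz − u(x)) is the concave conjugate of u. -/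

import Mathlib

open MeasureTheory Filter Set
open scoped ENNReal

noncomputable section

namespace SystemicRisk

variable {Ω : Type*} [MeasurableSpace Ω]

/-- A random variable is essentially bounded. -/
def EssBdd {μ : Measure Ω} (f : Ω →ₘ[μ] ℝ) : Prop :=
  ∃ C : ℝ, ∀ᵐ ω ∂μ, |f ω| ≤ C

/-- The scalar pairing `E[U W]`. -/
def ip {μ : Measure Ω} (U W : Ω →ₘ[μ] ℝ) : ℝ := ∫ ω, U ω * W ω ∂μ

/-- The Köthe dual of a set of random variables. -/
def kdual {μ : Measure Ω} (L : Set (Ω →ₘ[μ] ℝ)) : Set (Ω →ₘ[μ] ℝ) :=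
  {Z | ∀ f ∈ L, Integrable (fun ω => f ω * Z ω) μ}

/-- `nrm` is a Banach lattice norm on `L` (w.r.t. the a.s. order). -/
structure IsBLNorm {μ : Measure Ω} (L : Set (Ω →ₘ[μ] ℝ)) (nrm : (Ω →ₘ[μ] ℝ) → ℝ) : Prop where
  nonneg : ∀ f ∈ L, 0 ≤ nrm f
  eq_zero_iff : ∀ f ∈ L, (nrm f = 0 ↔ f = 0)
  smul_eq : ∀ f ∈ L, ∀ c : ℝ, nrm (c • f) = |c| * nrm f
  triangle : ∀ f ∈ L, ∀ g ∈ L, nrm (f + g) ≤ nrm f + nrm g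
  solid : ∀ f ∈ L, ∀ g ∈ L, |f| ≤ |g| → nrm f ≤ nrm g
  complete : ∀ u : ℕ → (Ω →ₘ[μ] ℝ), (∀ n, u n ∈ L) →
      (∀ ε : ℝ, 0 < ε → ∃ N : ℕ, ∀ m ≥ N, ∀ n ≥ N, nrm (u m - u n) < ε) →
      ∃ f ∈ L, ∀ ε : ℝ, 0 < ε → ∃ N : ℕ, ∀ n ≥ N, nrm (u n - f) < ε

/-- `L` is an admissible space: a linear subspace of `L^0` which is a Banach lattice
(for the a.s. order, with norm `nrm`) satisfying `L^∞ ⊆ L ⊆ L^1`. -/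
structure IsAdmissible {μ : Measure Ω} (L : Set (Ω →ₘ[μ] ℝ)) (nrm : (Ω →ₘ[μ] ℝ) → ℝ) : Prop where
  zero_mem : (0 : Ω →ₘ[μ] ℝ) ∈ L
  add_mem : ∀ f ∈ L, ∀ g ∈ L, f + g ∈ L
  smul_mem : ∀ (c : ℝ), ∀ f ∈ L, c • f ∈ L
  sup_mem : ∀ f ∈ L, ∀ g ∈ L, f ⊔ g ∈ L
  inf_mem : ∀ f ∈ L, ∀ g ∈ L, f ⊓ g ∈ L
  linfty_subset : ∀ f, EssBdd f → f ∈ L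
  subset_lone : ∀ f ∈ L, Integrable f μ
  banach : IsBLNorm L nrm

variable {d : ℕ}

/-- The product space `X = X_1 × ⋯ × X_d`. -/
def prodSet {μ : Measure Ω} (Li : Fin d → Set (Ω →ₘ[μ] ℝ)) : Set (Fin d → (Ω →ₘ[μ] ℝ)) :=
  {X | ∀ i, X i ∈ Li i}

/-- The vector pairing `E[⟨X,Z⟩] = ∑ i, E[X_i Z_i]`. -/
def pairing {μ : Measure Ω} (X Z : Fin d → (Ω →ₘ[μ] ℝ)) : ℝ := ∑ i, ip (X i) (Z i)

/-- The constant random vector associated with `m ∈ ℝ^d`. -/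
def cvec (μ : Measure Ω) (m : Fin d → ℝ) : Fin d → (Ω →ₘ[μ] ℝ) :=
  fun i => (AEEqFun.const Ω (m i) : Ω →ₘ[μ] ℝ)

/-- The weak topology `σ(P, D)` on a set of random vectors `P` induced by the pairing
with elements of `D`. -/
def wtop {μ : Measure Ω} (P D : Set (Fin d → (Ω →ₘ[μ] ℝ))) : TopologicalSpace ↥P :=
  TopologicalSpace.induced
    (fun X : ↥P => fun Z : ↥D => pairing (X : Fin d → (Ω →ₘ[μ] ℝ)) (Z : Fin d → (Ω →ₘ[μ] ℝ)))
    Pi.topologicalSpace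

/-- The weak topology `σ(P, D)` on a set of random variables `P` induced by the pairing
with elements of `D`. -/
def wtop1 {μ : Measure Ω} (P D : Set (Ω →ₘ[μ] ℝ)) : TopologicalSpace ↥P :=
  TopologicalSpace.induced
    (fun U : ↥P => fun W : ↥D => ip (U : Ω →ₘ[μ] ℝ) (W : Ω →ₘ[μ] ℝ))
    Pi.topologicalSpace

/-- An admissible impact map `S : X → E`. -/
structure IsAdmissibleImpact {μ : Measure Ω} (XX XX' : Set (Fin d → (Ω →ₘ[μ] ℝ)))
    (EE EE' : Set (Ω →ₘ[μ] ℝ)) (S : (Fin d → (Ω →ₘ[μ] ℝ)) → (Ω →ₘ[μ] ℝ)) : Prop where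
  mapsTo : ∀ X ∈ XX, S X ∈ EE
  nonconst : ∃ X ∈ XX, ∃ Y ∈ XX, S X ≠ S Y
  normalized : S 0 = 0
  mono : ∀ X ∈ XX, ∀ Y ∈ XX, X ≤ Y → S X ≤ S Y
  concave : ∀ X ∈ XX, ∀ Y ∈ XX, ∀ t : ℝ, 0 ≤ t → t ≤ 1 →
      t • S X + (1 - t) • S Y ≤ S (t • X + (1 - t) • Y)
  usc : ∀ W ∈ EE', (0 : Ω →ₘ[μ] ℝ) ≤ W →
      @UpperSemicontinuous (↥XX) ℝ (wtop XX XX') _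
        (fun X : ↥XX => ∫ ω, S (X : Fin d → (Ω →ₘ[μ] ℝ)) ω * W ω ∂μ)

/-- An admissible acceptance set `A ⊆ E` (relative to the impact map `S`). -/
structure IsAdmissibleAcceptance {μ : Measure Ω} (XX : Set (Fin d → (Ω →ₘ[μ] ℝ)))
    (EE EE' : Set (Ω →ₘ[μ] ℝ)) (S : (Fin d → (Ω →ₘ[μ] ℝ)) → (Ω →ₘ[μ] ℝ))
    (A : Set (Ω →ₘ[μ] ℝ)) : Prop where
  subset : A ⊆ EE
  preimage_nonempty : ∃ X ∈ XX, S X ∈ A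
  preimage_proper : ∃ X ∈ XX, S X ∉ A
  zero_mem : (0 : Ω →ₘ[μ] ℝ) ∈ A
  mono : ∀ U ∈ A, ∀ V ∈ EE, (0 : Ω →ₘ[μ] ℝ) ≤ V → U + V ∈ A
  convex : ∀ U ∈ A, ∀ V ∈ A, ∀ t : ℝ, 0 ≤ t → t ≤ 1 → t • U + (1 - t) • V ∈ A
  closed : @IsClosed (↥EE) (wtop1 EE EE') {U : ↥EE | (U : Ω →ₘ[μ] ℝ) ∈ A}

/-- The systemic acceptance set `S⁻¹(A) = {X ∈ X : S(X) ∈ A}`. -/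
def sysAcc {μ : Measure Ω} (XX : Set (Fin d → (Ω →ₘ[μ] ℝ)))
    (S : (Fin d → (Ω →ₘ[μ] ℝ)) → (Ω →ₘ[μ] ℝ)) (A : Set (Ω →ₘ[μ] ℝ)) :
    Set (Fin d → (Ω →ₘ[μ] ℝ)) :=
  {X ∈ XX | S X ∈ A}

/-- The "first allocate, then aggregate" systemic risk measure `ρ`. -/
def rho (μ : Measure Ω) (S : (Fin d → (Ω →ₘ[μ] ℝ)) → (Ω →ₘ[μ] ℝ)) (A : Set (Ω →ₘ[μ] ℝ))
    (X : Fin d → (Ω →ₘ[μ] ℝ)) : EReal :=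
  ⨅ m ∈ {m : Fin d → ℝ | S (X + cvec μ m) ∈ A}, ((∑ i, m i : ℝ) : EReal)

/-- The (lower) support function of a set of random vectors. -/
def suppV {μ : Measure Ω} (B : Set (Fin d → (Ω →ₘ[μ] ℝ))) (Z : Fin d → (Ω →ₘ[μ] ℝ)) : EReal :=
  ⨅ X ∈ B, ((pairing X Z : ℝ) : EReal)

/-- The barrier cone of a set of random vectors, inside the dual set `D`. -/
def barrV {μ : Measure Ω} (B D : Set (Fin d → (Ω →ₘ[μ] ℝ))) : Set (Fin d → (Ω →ₘ[μ] ℝ)) :=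
  {Z ∈ D | ⊥ < suppV B Z}

/-- The (lower) support function of a set of random variables. -/
def suppS {μ : Measure Ω} (A : Set (Ω →ₘ[μ] ℝ)) (W : Ω →ₘ[μ] ℝ) : EReal :=
  ⨅ U ∈ A, ((ip U W : ℝ) : EReal)

/-- The barrier cone of a set of random variables, inside the dual set `D`. -/
def barrS {μ : Measure Ω} (A D : Set (Ω →ₘ[μ] ℝ)) : Set (Ω →ₘ[μ] ℝ) :=
  {W ∈ D | ⊥ < suppS A W}

/-- The generic penalty function with dual variables `W` ranging over `K`. -/
def penalty {μ : Measure Ω} (XX : Set (Fin d → (Ω →ₘ[μ] ℝ)))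
    (A : Set (Ω →ₘ[μ] ℝ)) (S : (Fin d → (Ω →ₘ[μ] ℝ)) → (Ω →ₘ[μ] ℝ))
    (K : Set (Ω →ₘ[μ] ℝ)) (Z : Fin d → (Ω →ₘ[μ] ℝ)) : EReal :=
  ⨆ W ∈ K, (suppS A W +
    ⨅ X ∈ XX, ((pairing X Z - ∫ ω, S X ω * W ω ∂μ : ℝ) : EReal))

/-- a.s. strictly positive random variables. -/
def strictPos (μ : Measure Ω) : Set (Ω →ₘ[μ] ℝ) := {W | ∀ᵐ ω ∂μ, 0 < W ω}

/-- The penalty function `α`. -/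
def alpha {μ : Measure Ω} (XX : Set (Fin d → (Ω →ₘ[μ] ℝ))) (EE' : Set (Ω →ₘ[μ] ℝ))
    (A : Set (Ω →ₘ[μ] ℝ)) (S : (Fin d → (Ω →ₘ[μ] ℝ)) → (Ω →ₘ[μ] ℝ)) :
    (Fin d → (Ω →ₘ[μ] ℝ)) → EReal :=
  penalty XX A S (barrS A EE')

/-- The penalty function `α⁺`. -/
def alphaPlus {μ : Measure Ω} (XX : Set (Fin d → (Ω →ₘ[μ] ℝ))) (EE' : Set (Ω →ₘ[μ] ℝ))
    (A : Set (Ω →ₘ[μ] ℝ)) (S : (Fin d → (Ω →ₘ[μ] ℝ)) → (Ω →ₘ[μ] ℝ)) :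
    (Fin d → (Ω →ₘ[μ] ℝ)) → EReal :=
  penalty XX A S (barrS A EE' ∩ (strictPos μ ∪ {0}))

/-- a.s. strictly positive random vectors. -/
def strictPosV (μ : Measure Ω) (d : ℕ) : Set (Fin d → (Ω →ₘ[μ] ℝ)) :=
  {Z | ∀ i, ∀ᵐ ω ∂μ, 0 < Z i ω}

/-- The set `C` of nonnegative dual vectors with all components of expectation one. -/
def Cset {μ : Measure Ω} (XX' : Set (Fin d → (Ω →ₘ[μ] ℝ))) : Set (Fin d → (Ω →ₘ[μ] ℝ)) :=
  {Z ∈ XX' | (∀ i, (0 : Ω →ₘ[μ] ℝ) ≤ Z i) ∧ ∀ i, (∫ ω, Z i ω ∂μ) = 1}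

/-- A map with values in `[−∞,∞]` is proper on `P` if it never attains `−∞` on `P`
and is finite somewhere on `P`. -/
def ProperOn {β : Type*} (P : Set β) (f : β → EReal) : Prop :=
  (∀ x ∈ P, f x ≠ ⊥) ∧ ∃ x ∈ P, f x ≠ ⊤

/-- The positive part of an extended real number, as an extended nonnegative real. -/
def epos (x : EReal) : ℝ≥0∞ := if x = ⊤ then ⊤ else ENNReal.ofReal x.toReal

/-- The integral of an extended-real-valued function. -/
def eintegral (μ : Measure Ω) (g : Ω → EReal) : EReal :=
  ((∫⁻ ω, epos (g ω) ∂μ : ℝ≥0∞) : EReal) - ((∫⁻ ω, epos (-(g ω)) ∂μ : ℝ≥0∞) : EReal)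


/-- The concave conjugate `u•(z) = inf_x (xz − u(x))` of a utility function. -/
def uConj (u : ℝ → ℝ) (z : ℝ) : EReal :=
  ⨅ x : ℝ, ((x * z - u x : ℝ) : EReal)

/-- The utility-based (shortfall) risk measure `ρ_u`. -/
def rhoU (μ : Measure Ω) (u : ℝ → ℝ) (u0 : ℝ) (X : Ω →ₘ[μ] ℝ) : EReal :=
  ⨅ m ∈ {m : ℝ | u0 ≤ ∫ ω, u (X ω + m) ∂μ}, ((m : ℝ) : EReal)


/-! ### Auxiliary material for Statement 19 -/

section Statement19Aux

variable {u : ℝ → ℝ} {u0 : ℝ}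

/-- A real-valued helper: `a ≤ b` if `a ≤ b + ε` for all `ε > 0`. -/
private lemma le_of_forall_pos_le_add' {a b : ℝ} (h : ∀ ε : ℝ, 0 < ε → a ≤ b + ε) : a ≤ b := by
  by_contra hab
  push_neg at hab
  have := h ((a - b) / 2) (by linarith)
  linarith

/-- A nonconstant monotone concave function takes values below any level. -/
lemma exists_u_lt (hm : Monotone u) (hc : ConcaveOn ℝ Set.univ u)
    (hnc : ∃ x y : ℝ, u x ≠ u y) (c : ℝ) : ∃ t : ℝ, u t < c := by
  obtain ⟨x, y, hxy⟩ := hnc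
  have hab : ∃ a b : ℝ, a < b ∧ u a < u b := by
    rcases lt_trichotomy x y with h | h | h
    · exact ⟨x, y, h, (hm h.le).lt_of_ne hxy⟩
    · exact absurd (by rw [h]) hxy
    · exact ⟨y, x, h, (hm h.le).lt_of_ne (Ne.symm hxy)⟩
  obtain ⟨a, b, hab, hu⟩ := hab
  set s : ℝ := (u b - u a) / (b - a) with hs_def
  have hs : 0 < s := div_pos (by linarith) (by linarith)
  set t : ℝ := a - (|u a - c| + 1) / s with ht_def
  have hq : 0 < (|u a - c| + 1) / s := div_pos (by positivity) hs
  have ht : t < a := by simp only [ht_def]; linarith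
  refine ⟨t, ?_⟩
  have hsl := hc.slope_anti_adjacent (Set.mem_univ t) (Set.mem_univ b) ht hab
  -- hsl : (u b - u a) / (b - a) ≤ (u a - u t) / (a - t)
  have h2 : s * (a - t) ≤ u a - u t := (le_div_iff₀ (by linarith : (0:ℝ) < a - t)).1 hsl
  have h3 : a - t = (|u a - c| + 1) / s := by simp [ht_def]
  have h4 : s * ((|u a - c| + 1) / s) = |u a - c| + 1 := mul_div_cancel₀ _ hs.ne'
  have h5 : u a - c ≤ |u a - c| := le_abs_self _
  rw [h3, h4] at h2
  linarith

/-- Left derivative of a concave function, defined as the infimum of left slopes. -/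
def lder (u : ℝ → ℝ) (y : ℝ) : ℝ :=
  sInf ((fun x => (u y - u x) / (y - x)) '' Set.Iio y)

lemma lder_set_nonempty (y : ℝ) :
    ((fun x => (u y - u x) / (y - x)) '' Set.Iio y).Nonempty :=
  ⟨_, ⟨y - 1, by simp, rfl⟩⟩

lemma lder_set_nonneg (hm : Monotone u) (y : ℝ) :
    ∀ z ∈ (fun x => (u y - u x) / (y - x)) '' Set.Iio y, 0 ≤ z := by
  rintro _ ⟨x, hx, rfl⟩
  have hx' : x < y := hx
  exact div_nonneg (sub_nonneg.2 (hm hx'.le)) (sub_nonneg.2 hx'.le)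

lemma lder_set_bddBelow (hm : Monotone u) (y : ℝ) :
    BddBelow ((fun x => (u y - u x) / (y - x)) '' Set.Iio y) :=
  ⟨0, fun z hz => lder_set_nonneg hm y z hz⟩

lemma lder_nonneg (hm : Monotone u) (y : ℝ) : 0 ≤ lder u y :=
  le_csInf (lder_set_nonempty y) (lder_set_nonneg hm y)

lemma lder_le_slope (hm : Monotone u) {x y : ℝ} (h : x < y) :
    lder u y ≤ (u y - u x) / (y - x) :=
  csInf_le (lder_set_bddBelow hm y) ⟨x, h, rfl⟩

lemma slope_le_lder (hc : ConcaveOn ℝ Set.univ u) {y t : ℝ} (h : y < t) :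
    (u t - u y) / (t - y) ≤ lder u y := by
  refine le_csInf (lder_set_nonempty y) ?_
  rintro _ ⟨x, hx, rfl⟩
  exact hc.slope_anti_adjacent (Set.mem_univ x) (Set.mem_univ t) hx h

/-- Supergradient inequality for the left derivative of a concave function. -/
lemma lder_superdiff (hm : Monotone u) (hc : ConcaveOn ℝ Set.univ u) (y t : ℝ) :
    u t ≤ u y + lder u y * (t - y) := by
  rcases lt_trichotomy t y with h | h | h
  · have h1 := lder_le_slope hm h
    have h2 : lder u y * (y - t) ≤ u y - u t :=
      (le_div_iff₀ (by linarith : (0:ℝ) < y - t)).1 h1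
    nlinarith
  · subst h; simp
  · have h1 := slope_le_lder hc h
    have h2 : u t - u y ≤ lder u y * (t - y) :=
      (div_le_iff₀ (by linarith : (0:ℝ) < t - y)).1 h1
    linarith

lemma lder_antitone (hm : Monotone u) (hc : ConcaveOn ℝ Set.univ u) :
    Antitone (lder u) := by
  intro y z hyz
  rcases eq_or_lt_of_le hyz with h | h
  · rw [h]
  · exact (lder_le_slope hm h).trans (slope_le_lder hc h)

/-- The concave conjugate evaluated at the left derivative. -/
lemma uConj_lder (hm : Monotone u) (hc : ConcaveOn ℝ Set.univ u) (y : ℝ) :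
    uConj u (lder u y) = ((y * lder u y - u y : ℝ) : EReal) := by
  refine le_antisymm (iInf_le _ y) (le_iInf fun x => ?_)
  refine EReal.coe_le_coe_iff.2 ?_
  have h := lder_superdiff hm hc y x
  nlinarith [lder_superdiff hm hc y x]

lemma uConj_le (u : ℝ → ℝ) (z x : ℝ) : uConj u z ≤ ((x * z - u x : ℝ) : EReal) :=
  iInf_le _ x

/-! #### `eintegral` lemmas -/

variable {Ω : Type*} [MeasurableSpace Ω] {μ : Measure Ω}

lemma epos_coe (r : ℝ) : epos (r : EReal) = ENNReal.ofReal r := by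
  simp [epos]

lemma epos_neg_coe (r : ℝ) : epos (-(r : EReal)) = ENNReal.ofReal (-r) := by
  rw [← EReal.coe_neg, epos_coe]

lemma epos_mono : Monotone epos := by
  intro x y h
  unfold epos
  rcases eq_or_ne y ⊤ with hy | hy
  · simp [hy]
  · have hx : x ≠ ⊤ := fun hx => hy (top_le_iff.1 (hx ▸ h))
    simp only [hx, hy, if_false]
    rcases eq_or_ne x ⊥ with hb | hb
    · simp [hb]
    · exact ENNReal.ofReal_le_ofReal (EReal.toReal_le_toReal h hb hy)

lemma eintegral_congr_ae {f g : Ω → EReal} (h : f =ᵐ[μ] g) :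
    eintegral μ f = eintegral μ g := by
  unfold eintegral
  have h1 : ∫⁻ ω, epos (f ω) ∂μ = ∫⁻ ω, epos (g ω) ∂μ :=
    lintegral_congr_ae (h.mono fun ω hω => by simp only [hω])
  have h2 : ∫⁻ ω, epos (-f ω) ∂μ = ∫⁻ ω, epos (-g ω) ∂μ :=
    lintegral_congr_ae (h.mono fun ω hω => by simp only [hω])
  rw [h1, h2]

lemma lintegral_ofReal_lt_top {h : Ω → ℝ} (hh : Integrable h μ) :
    ∫⁻ ω, ENNReal.ofReal (h ω) ∂μ < ⊤ := by
  refine lt_of_le_of_lt (lintegral_mono fun ω => ?_) hh.hasFiniteIntegral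
  rw [← ofReal_norm, Real.norm_eq_abs]
  exact ENNReal.ofReal_le_ofReal (le_abs_self _)

lemma eintegral_coe {h : Ω → ℝ} (hh : Integrable h μ) :
    eintegral μ (fun ω => ((h ω : ℝ) : EReal)) = ((∫ ω, h ω ∂μ : ℝ) : EReal) := by
  unfold eintegral
  simp_rw [epos_coe, epos_neg_coe]
  have hA : (∫⁻ ω, ENNReal.ofReal (h ω) ∂μ) ≠ ⊤ := (lintegral_ofReal_lt_top hh).ne
  have hB : (∫⁻ ω, ENNReal.ofReal (-h ω) ∂μ) ≠ ⊤ := by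
    simpa using (lintegral_ofReal_lt_top hh.neg).ne
  rw [integral_eq_lintegral_pos_part_sub_lintegral_neg_part hh]
  rw [EReal.coe_sub]
  congr 1
  · rw [← EReal.coe_toReal (x := ((∫⁻ ω, ENNReal.ofReal (h ω) ∂μ : ℝ≥0∞) : EReal))
      (by simpa [EReal.coe_ennreal_eq_top_iff] using hA) (by simp),
      EReal.toReal_coe_ennreal]
  · rw [← EReal.coe_toReal (x := ((∫⁻ ω, ENNReal.ofReal (-h ω) ∂μ : ℝ≥0∞) : EReal))
      (by simpa [EReal.coe_ennreal_eq_top_iff] using hB) (by simp),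
      EReal.toReal_coe_ennreal]

lemma eintegral_mono {f g : Ω → EReal} (h : ∀ ω, f ω ≤ g ω) :
    eintegral μ f ≤ eintegral μ g := by
  unfold eintegral
  refine EReal.sub_le_sub ?_ ?_
  · exact EReal.coe_ennreal_le_coe_ennreal_iff.2 (lintegral_mono fun ω => epos_mono (h ω))
  · exact EReal.coe_ennreal_le_coe_ennreal_iff.2
      (lintegral_mono fun ω => epos_mono (EReal.neg_le_neg_iff.2 (h ω)))

lemma eintegral_le_coe {f : Ω → EReal} {h : Ω → ℝ} (hh : Integrable h μ)
    (hfh : ∀ ω, f ω ≤ ((h ω : ℝ) : EReal)) :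
    eintegral μ f ≤ ((∫ ω, h ω ∂μ : ℝ) : EReal) := by
  rw [← eintegral_coe hh]
  exact eintegral_mono hfh

/-- Multiplication by a positive real constant in `EReal`, bounded case. -/
private lemma coe_mul_le_of_le {c r : ℝ} (hc : 0 < c) {A : EReal} (h : A ≤ (r : EReal)) :
    (c : EReal) * A ≤ ((c * r : ℝ) : EReal) := by
  induction A using EReal.rec with
  | bot => rw [EReal.coe_mul_bot_of_pos hc]; exact bot_le
  | coe a =>
      rw [← EReal.coe_mul]
      exact EReal.coe_le_coe_iff.2
        (mul_le_mul_of_nonneg_left (EReal.coe_le_coe_iff.1 h) hc.le)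
  | top => exact absurd h (by simp)

/-! #### Integrability of `u ∘ (X + m)` -/

lemma integrable_u_comp [IsProbabilityMeasure μ] (hm : Monotone u)
    {X : Ω →ₘ[μ] ℝ} {C : ℝ} (hC : ∀ᵐ ω ∂μ, |X ω| ≤ C) (m : ℝ) :
    Integrable (fun ω => u (X ω + m)) μ := by
  refine Integrable.mono' (integrable_const (max |u (C + m)| |u (-C + m)|))
    ((hm.measurable.comp (X.stronglyMeasurable.measurable.add_const m)).aestronglyMeasurable) ?_
  filter_upwards [hC] with ω hω
  obtain ⟨h1, h2⟩ := abs_le.1 hω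
  have hu1 : u (X ω + m) ≤ u (C + m) := hm (by linarith)
  have hu2 : u (-C + m) ≤ u (X ω + m) := hm (by linarith)
  rw [Real.norm_eq_abs, abs_le]
  constructor
  · calc -(max |u (C + m)| |u (-C + m)|) ≤ -|u (-C + m)| := by
          exact neg_le_neg (le_max_right _ _)
      _ ≤ u (-C + m) := neg_abs_le _
      _ ≤ u (X ω + m) := hu2
  · calc u (X ω + m) ≤ u (C + m) := hu1
      _ ≤ |u (C + m)| := le_abs_self _
      _ ≤ max |u (C + m)| |u (-C + m)| := le_max_left _ _

/-! #### The scalar characterization of `ρ_u` -/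

lemma rhoU_spec [IsProbabilityMeasure μ] (hm : Monotone u) (hc : ConcaveOn ℝ Set.univ u)
    (hnc : ∃ x y : ℝ, u x ≠ u y) (hu0 : ∃ x : ℝ, u0 < u x)
    {X : Ω →ₘ[μ] ℝ} (hX : EssBdd X) :
    ∃ ms : ℝ, rhoU μ u u0 X = (ms : EReal) ∧ (∫ ω, u (X ω + ms) ∂μ) = u0 ∧
      ∀ r : ℝ, (u0 ≤ ∫ ω, u (X ω + r) ∂μ ↔ ms ≤ r) := by
  obtain ⟨C, hC⟩ := hX
  have hint : ∀ m : ℝ, Integrable (fun ω => u (X ω + m)) μ := integrable_u_comp hm hC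
  set g : ℝ → ℝ := fun m => ∫ ω, u (X ω + m) ∂μ with hg_def
  have gmono : Monotone g := fun m n hmn =>
    integral_mono_ae (hint m) (hint n) (Filter.Eventually.of_forall fun ω => hm (by linarith))
  obtain ⟨x0, hx0⟩ := hu0
  have hfeas0 : u0 ≤ g (x0 + C) := by
    have h1 : (∫ _ : Ω, u x0 ∂μ) ≤ g (x0 + C) := by
      refine integral_mono_ae (integrable_const _) (hint _) ?_
      filter_upwards [hC] with ω hω
      exact hm (by have := (abs_le.1 hω).1; linarith)
    rw [integral_const] at h1
    simp only [measure_univ, probReal_univ, ENNReal.toReal_one, one_mul, one_smul, smul_eq_mul] at h1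
    linarith
  obtain ⟨t, ht⟩ := exists_u_lt hm hc hnc u0
  have hinfeas : g (t - C) < u0 := by
    have h1 : g (t - C) ≤ ∫ _ : Ω, u t ∂μ := by
      refine integral_mono_ae (hint _) (integrable_const _) ?_
      filter_upwards [hC] with ω hω
      exact hm (by have := (abs_le.1 hω).2; linarith)
    rw [integral_const] at h1
    simp only [measure_univ, probReal_univ, ENNReal.toReal_one, one_mul, one_smul, smul_eq_mul] at h1
    linarith
  set F : Set ℝ := {m : ℝ | u0 ≤ g m} with hF_def
  have hFup : ∀ m ∈ F, ∀ n, m ≤ n → n ∈ F := fun m hm' n hmn => le_trans hm' (gmono hmn)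
  have hFne : F.Nonempty := ⟨x0 + C, hfeas0⟩
  have hFbdd : BddBelow F := by
    refine ⟨t - C, fun m hmF => ?_⟩
    by_contra h
    push_neg at h
    exact absurd (le_trans hmF (gmono h.le)) (not_le.2 hinfeas)
  set ms : ℝ := sInf F with hms_def
  have hstep : ∀ m δ : ℝ, 0 < δ → g (m + δ) ≤ g m + δ * (g m - g (m - 1)) := by
    intro m δ hδ
    have hpt : ∀ ω, u (X ω + (m + δ)) ≤
        u (X ω + m) + δ * (u (X ω + m) - u (X ω + (m - 1))) := by
      intro ω
      have hsl := hc.slope_anti_adjacent (Set.mem_univ (X ω + (m - 1)))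
        (Set.mem_univ (X ω + (m + δ)))
        (show X ω + (m - 1) < X ω + m by linarith)
        (show X ω + m < X ω + (m + δ) by linarith)
      have e1 : X ω + (m + δ) - (X ω + m) = δ := by ring
      have e2 : X ω + m - (X ω + (m - 1)) = 1 := by ring
      rw [e1, e2, div_one] at hsl
      have := (div_le_iff₀ hδ).1 hsl
      nlinarith
    have hsub : Integrable (fun ω => u (X ω + m) - u (X ω + (m - 1))) μ :=
      (hint m).sub (hint (m - 1))
    have hB : Integrable (fun ω => δ * (u (X ω + m) - u (X ω + (m - 1)))) μ :=
      hsub.const_mul δ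
    have hintR : Integrable
        (fun ω => u (X ω + m) + δ * (u (X ω + m) - u (X ω + (m - 1)))) μ :=
      (hint m).add hB
    have h1 := integral_mono_ae (hint (m + δ)) hintR (Filter.Eventually.of_forall hpt)
    rw [integral_add (hint m) hB, integral_const_mul, integral_sub (hint m) (hint (m - 1))] at h1
    exact h1
  have hmsF : ms ∈ F := by
    have key : ∀ δ : ℝ, 0 < δ → u0 ≤ g ms + δ * (g ms - g (ms - 1)) := by
      intro δ hδ
      obtain ⟨m', hm'F, hm'lt⟩ := exists_lt_of_csInf_lt hFne (lt_add_of_pos_right ms hδ)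
      exact le_trans (hFup m' hm'F (ms + δ) hm'lt.le) (hstep ms δ hδ)
    have hK : 0 ≤ g ms - g (ms - 1) := sub_nonneg.2 (gmono (by linarith))
    show u0 ≤ g ms
    rcases eq_or_lt_of_le hK with hK0 | hKpos
    · have := key 1 one_pos
      rw [← hK0] at this
      linarith
    · refine le_of_forall_pos_le_add' fun ε hε => ?_
      have := key (ε / (g ms - g (ms - 1))) (div_pos hε hKpos)
      rw [div_mul_cancel₀ _ hKpos.ne'] at this
      exact this
  have hiff : ∀ r : ℝ, (u0 ≤ g r ↔ ms ≤ r) :=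
    fun r => ⟨fun h => csInf_le hFbdd h, fun h => hFup ms hmsF r h⟩
  have hle : g ms ≤ u0 := by
    have key : ∀ δ : ℝ, 0 < δ → δ ≤ 1 → g ms ≤ u0 + δ * (g ms - g (ms - 2)) := by
      intro δ h0 h1
      have h2 := hstep (ms - δ) δ h0
      rw [sub_add_cancel] at h2
      have h3 : g (ms - δ) < u0 := by
        by_contra h
        push_neg at h
        have := csInf_le hFbdd h
        linarith
      have h4 : g (ms - δ) - g (ms - δ - 1) ≤ g ms - g (ms - 2) :=
        sub_le_sub (gmono (by linarith)) (gmono (by linarith))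
      nlinarith
    have hK2 : 0 ≤ g ms - g (ms - 2) := sub_nonneg.2 (gmono (by linarith))
    refine le_of_forall_pos_le_add' fun ε hε => ?_
    rcases eq_or_lt_of_le hK2 with hK0 | hKpos
    · have := key 1 one_pos le_rfl
      rw [← hK0] at this
      linarith
    · have hδpos : 0 < min 1 (ε / (g ms - g (ms - 2))) :=
        lt_min one_pos (div_pos hε hKpos)
      have := key _ hδpos (min_le_left _ _)
      have h6 : min 1 (ε / (g ms - g (ms - 2))) * (g ms - g (ms - 2)) ≤ ε := by
        calc min 1 (ε / (g ms - g (ms - 2))) * (g ms - g (ms - 2))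
            ≤ (ε / (g ms - g (ms - 2))) * (g ms - g (ms - 2)) :=
              mul_le_mul_of_nonneg_right (min_le_right _ _) hKpos.le
          _ = ε := div_mul_cancel₀ _ hKpos.ne'
      linarith
  have hgms : g ms = u0 := le_antisymm hle hmsF
  have hrho : rhoU μ u u0 X = (ms : EReal) := by
    refine le_antisymm (iInf₂_le ms hmsF) (le_iInf₂ fun m hmF => ?_)
    exact EReal.coe_le_coe_iff.2 ((hiff m).1 hmF)
  exact ⟨ms, hrho, hgms, hiff⟩

lemma rhoU_le_coe_iff [IsProbabilityMeasure μ] (hm : Monotone u) (hc : ConcaveOn ℝ Set.univ u)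
    (hnc : ∃ x y : ℝ, u x ≠ u y) (hu0 : ∃ x : ℝ, u0 < u x)
    {X : Ω →ₘ[μ] ℝ} (hX : EssBdd X) (r : ℝ) :
    rhoU μ u u0 X ≤ (r : EReal) ↔ u0 ≤ ∫ ω, u (X ω + r) ∂μ := by
  obtain ⟨ms, hrho, _, hiff⟩ := rhoU_spec hm hc hnc hu0 hX
  rw [hrho, EReal.coe_le_coe_iff, hiff]

end Statement19Aux

section Statement19Main

variable {Ω : Type*} [MeasurableSpace Ω] {μ : Measure Ω} {u : ℝ → ℝ} {u0 : ℝ}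

/-- Weak duality for the shortfall risk measure. -/
lemma weak_dual [IsProbabilityMeasure μ] (hm : Monotone u)
    {X : Ω →ₘ[μ] ℝ} {C : ℝ} (hC : ∀ᵐ ω ∂μ, |X ω| ≤ C)
    {Q : Measure Ω} [IsProbabilityMeasure Q] (hQ : Q ≪ μ)
    {lam : ℝ} (hlam : 0 < lam) {m : ℝ} (hfeas : u0 ≤ ∫ ω, u (X ω + m) ∂μ) :
    ((1/lam : ℝ) : EReal) * (((u0 : ℝ) : EReal) +
        eintegral μ (fun ω => uConj u (lam * (Q.rnDeriv μ ω).toReal)))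
      ≤ ((m + ∫ ω, X ω ∂Q : ℝ) : EReal) := by
  have hint := integrable_u_comp (μ := μ) hm hC
  set D : Ω → ℝ := fun ω => (Q.rnDeriv μ ω).toReal with hD_def
  have hD_int : Integrable D μ := Measure.integrable_toReal_rnDeriv
  have hXm_meas : AEStronglyMeasurable (fun ω => X ω + m) μ :=
    (X.stronglyMeasurable.measurable.add_const m).aestronglyMeasurable
  have hXmD_int : Integrable (fun ω => (X ω + m) * D ω) μ := by
    refine hD_int.bdd_mul (c := C + |m|) hXm_meas ?_
    filter_upwards [hC] with ω hω
    rw [Real.norm_eq_abs]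
    calc |X ω + m| ≤ |X ω| + |m| := abs_add_le _ _
      _ ≤ C + |m| := by linarith
  set h : Ω → ℝ := fun ω => lam * ((X ω + m) * D ω) - u (X ω + m) with hh_def
  have hh_int : Integrable h μ := (hXmD_int.const_mul lam).sub (hint m)
  have hpt : ∀ ω, uConj u (lam * D ω) ≤ ((h ω : ℝ) : EReal) := by
    intro ω
    have e : h ω = (X ω + m) * (lam * D ω) - u (X ω + m) := by simp [hh_def]; ring
    rw [e]
    exact uConj_le u _ _
  have hei : eintegral μ (fun ω => uConj u (lam * D ω)) ≤ ((∫ ω, h ω ∂μ : ℝ) : EReal) :=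
    eintegral_le_coe hh_int hpt
  -- compute ∫ h
  have hXQ_int : Integrable (fun ω => X ω) Q := by
    refine Integrable.mono' (integrable_const C) (AEStronglyMeasurable.mono_ac hQ X.aestronglyMeasurable) ?_
    exact (hC.filter_mono hQ.ae_le).mono fun ω hω => by rwa [Real.norm_eq_abs]
  have hrnd : ∫ ω, (X ω + m) * D ω ∂μ = ∫ ω, X ω ∂Q + m := by
    have h1 : ∫ ω, (X ω + m) * D ω ∂μ = ∫ ω, (Q.rnDeriv μ ω).toReal • (X ω + m) ∂μ := by
      congr 1; funext ω; simp [hD_def, smul_eq_mul]; ring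
    rw [h1, integral_rnDeriv_smul hQ,
      integral_add hXQ_int (integrable_const m), integral_const]
    simp
  have hinth : ∫ ω, h ω ∂μ = lam * (∫ ω, X ω ∂Q + m) - ∫ ω, u (X ω + m) ∂μ := by
    rw [hh_def]
    have hcm : Integrable (fun ω => lam * ((X ω + m) * D ω)) μ := hXmD_int.const_mul lam
    rw [integral_sub hcm (hint m), integral_const_mul, hrnd]
  -- EReal chain
  have step1 : ((u0 : ℝ) : EReal) + eintegral μ (fun ω => uConj u (lam * D ω))
      ≤ ((u0 + ∫ ω, h ω ∂μ : ℝ) : EReal) := by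
    rw [EReal.coe_add]
    exact add_le_add le_rfl hei
  have step2 : ((u0 + ∫ ω, h ω ∂μ : ℝ) : EReal) ≤ ((lam * (∫ ω, X ω ∂Q + m) : ℝ) : EReal) := by
    refine EReal.coe_le_coe_iff.2 ?_
    rw [hinth]
    linarith
  have step3 := coe_mul_le_of_le (c := 1/lam) (by positivity) (step1.trans step2)
  have e2 : (1/lam) * (lam * (∫ ω, X ω ∂Q + m)) = m + ∫ ω, X ω ∂Q := by
    field_simp; ring
  rw [e2] at step3
  exact step3

/-- The dual representation of the shortfall risk measure on `L^∞`. -/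
lemma dual_rep [IsProbabilityMeasure μ]
    (hnc : ∃ x y : ℝ, u x ≠ u y) (hc : ConcaveOn ℝ Set.univ u) (hm : Monotone u)
    (hu0 : ∃ x : ℝ, u0 < u x) {X : Ω →ₘ[μ] ℝ} (hX : EssBdd X) :
    rhoU μ u u0 X =
      ⨆ Q : {Q : Measure Ω // IsProbabilityMeasure Q ∧ Q ≪ μ},
        (((∫ ω, -(X ω) ∂(Q : Measure Ω)) : ℝ) : EReal) +
          ⨆ lam ∈ Set.Ioi (0 : ℝ),
            ((1 / lam : ℝ) : EReal) *
              (((u0 : ℝ) : EReal) +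
                eintegral μ (fun ω =>
                  uConj u (lam * ((Q : Measure Ω).rnDeriv μ ω).toReal))) := by
  obtain ⟨C, hC⟩ := hX
  obtain ⟨ms, hrho, hgms, hiff⟩ := rhoU_spec hm hc hnc hu0 ⟨C, hC⟩
  have hint := integrable_u_comp (μ := μ) hm hC
  rw [hrho]
  apply le_antisymm
  · -- strong duality : construct the optimal measure
    set Y : Ω → ℝ := fun ω => X ω + ms with hY_def
    have hYmeas : Measurable Y := X.stronglyMeasurable.measurable.add_const ms
    set W : Ω → ℝ := fun ω => lder u (Y ω) with hW_def
    have hWmeas : Measurable W := (lder_antitone hm hc).measurable.comp hYmeas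
    have hWnonneg : ∀ ω, 0 ≤ W ω := fun ω => lder_nonneg hm _
    have hWbdd : ∀ᵐ ω ∂μ, ‖W ω‖ ≤ |lder u (ms - C)| := by
      filter_upwards [hC] with ω hω
      have h1 : ms - C ≤ Y ω := by
        have := (abs_le.1 hω).1; simp only [hY_def]; linarith
      have h2 : W ω ≤ lder u (ms - C) := lder_antitone hm hc h1
      rw [Real.norm_eq_abs, abs_of_nonneg (hWnonneg ω)]
      exact h2.trans (le_abs_self _)
    have hWint : Integrable W μ :=
      Integrable.mono' (integrable_const _) hWmeas.aestronglyMeasurable hWbdd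
    set lam0 : ℝ := ∫ ω, W ω ∂μ with hlam0_def
    have hlam0_pos : 0 < lam0 := by
      rcases (integral_nonneg (f := W) hWnonneg).lt_or_eq with hpos | heq
      · exact hpos
      · exfalso
        have hW0 : W =ᵐ[μ] 0 :=
          (integral_eq_zero_iff_of_nonneg (fun ω => hWnonneg ω) hWint).1 heq.symm
        obtain ⟨x0, hx0⟩ := hu0
        have hub : ∀ᵐ ω ∂μ, u x0 ≤ u (Y ω) := by
          filter_upwards [hW0] with ω hω
          have hω' : lder u (Y ω) = 0 := hω
          have hsd := lder_superdiff hm hc (Y ω) x0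
          rw [hω'] at hsd
          linarith
        have h2 : u x0 ≤ ∫ ω, u (Y ω) ∂μ := by
          have h3 := integral_mono_ae (integrable_const (u x0)) (hint ms) hub
          rw [integral_const] at h3
          simpa using h3
        have h4 : (∫ ω, u (Y ω) ∂μ) = u0 := hgms
        linarith
    set Z : Ω → ℝ := fun ω => W ω / lam0 with hZ_def
    have hZmeas : Measurable Z := hWmeas.div_const _
    have hZnonneg : ∀ ω, 0 ≤ Z ω := fun ω => div_nonneg (hWnonneg ω) hlam0_pos.le
    have hZint : Integrable Z μ := hWint.div_const _
    have hZint1 : ∫ ω, Z ω ∂μ = 1 := by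
      rw [hZ_def]
      rw [integral_div]
      exact div_self hlam0_pos.ne'
    set Q0 : Measure Ω := μ.withDensity (fun ω => ENNReal.ofReal (Z ω)) with hQ0_def
    have hQ0ac : Q0 ≪ μ := withDensity_absolutelyContinuous _ _
    have hQ0prob : IsProbabilityMeasure Q0 := by
      constructor
      rw [hQ0_def, withDensity_apply _ MeasurableSet.univ, setLIntegral_univ,
        ← ofReal_integral_eq_lintegral_ofReal hZint (Filter.Eventually.of_forall hZnonneg),
        hZint1, ENNReal.ofReal_one]
    have hQ0int : ∀ f : Ω → ℝ, ∫ ω, f ω ∂Q0 = ∫ ω, Z ω * f ω ∂μ := by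
      intro f
      rw [hQ0_def]
      have hZNN : Measurable fun ω => (Z ω).toNNReal :=
        measurable_real_toNNReal.comp hZmeas
      have e : (fun ω => ENNReal.ofReal (Z ω))
          = fun ω => (((Z ω).toNNReal : NNReal) : ℝ≥0∞) := rfl
      rw [e, integral_withDensity_eq_integral_smul hZNN f]
      congr 1; funext ω
      rw [NNReal.smul_def, smul_eq_mul, Real.coe_toNNReal _ (hZnonneg ω)]
    have hrnd : (fun ω => (Q0.rnDeriv μ ω).toReal) =ᵐ[μ] Z := by
      filter_upwards [Measure.rnDeriv_withDensity μ
        (ENNReal.measurable_ofReal.comp hZmeas)] with ω hω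
      rw [hQ0_def]
      rw [show Q0.rnDeriv μ ω = ENNReal.ofReal (Z ω) from hω,
        ENNReal.toReal_ofReal (hZnonneg ω)]
    have hYbdd : ∀ᵐ ω ∂μ, ‖Y ω‖ ≤ C + |ms| := by
      filter_upwards [hC] with ω hω
      rw [Real.norm_eq_abs, hY_def]
      calc |X ω + ms| ≤ |X ω| + |ms| := abs_add_le _ _
        _ ≤ C + |ms| := by linarith
    have hYWint : Integrable (fun ω => Y ω * W ω) μ :=
      hWint.bdd_mul hYmeas.aestronglyMeasurable hYbdd
    have hval : eintegral μ (fun ω => uConj u (lam0 * (Q0.rnDeriv μ ω).toReal))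
        = ((∫ ω, Y ω * W ω ∂μ - u0 : ℝ) : EReal) := by
      have h1 : (fun ω => uConj u (lam0 * (Q0.rnDeriv μ ω).toReal))
          =ᵐ[μ] fun ω => ((Y ω * W ω - u (Y ω) : ℝ) : EReal) := by
        filter_upwards [hrnd] with ω hω
        rw [hω]
        have e : lam0 * Z ω = W ω := by
          rw [hZ_def]; field_simp
        rw [e]
        exact uConj_lder hm hc (Y ω)
      have hsub : Integrable (fun ω => Y ω * W ω - u (Y ω)) μ := hYWint.sub (hint ms)
      rw [eintegral_congr_ae h1, eintegral_coe hsub, integral_sub hYWint (hint ms)]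
      have h4 : (∫ ω, u (Y ω) ∂μ) = u0 := hgms
      rw [h4]
    have hXZint : Integrable (fun ω => X ω * Z ω) μ := by
      refine hZint.bdd_mul (c := C) X.aestronglyMeasurable ?_
      filter_upwards [hC] with ω hω
      rwa [Real.norm_eq_abs]
    have hYZ : ∫ ω, Y ω * Z ω ∂μ = ∫ ω, X ω * Z ω ∂μ + ms := by
      have e : (fun ω => Y ω * Z ω) = fun ω => X ω * Z ω + ms * Z ω := by
        funext ω; rw [hY_def]; ring
      have hmsZ : Integrable (fun ω => ms * Z ω) μ := hZint.const_mul ms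
      rw [e, integral_add hXZint hmsZ, integral_const_mul, hZint1, mul_one]
    have hQ0negX : ∫ ω, -(X ω) ∂Q0 = -∫ ω, X ω * Z ω ∂μ := by
      rw [hQ0int (fun ω => -(X ω)), ← integral_neg]
      congr 1; funext ω; ring
    have hvalue : ((1/lam0 : ℝ) : EReal) * (((u0 : ℝ) : EReal) +
        eintegral μ (fun ω => uConj u (lam0 * (Q0.rnDeriv μ ω).toReal)))
        = ((∫ ω, Y ω * Z ω ∂μ : ℝ) : EReal) := by
      rw [hval, ← EReal.coe_add, ← EReal.coe_mul]
      refine congrArg _ ?_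
      have e : ∫ ω, Y ω * Z ω ∂μ = (∫ ω, Y ω * W ω ∂μ) / lam0 := by
        rw [← integral_div]
        congr 1; funext ω; rw [hZ_def]; ring
      rw [e]
      field_simp
      ring
    refine le_iSup_of_le ⟨Q0, hQ0prob, hQ0ac⟩ ?_
    show (ms : EReal) ≤ ((∫ ω, -(X ω) ∂Q0 : ℝ) : EReal) +
      ⨆ lam ∈ Set.Ioi (0 : ℝ),
        ((1 / lam : ℝ) : EReal) *
          (((u0 : ℝ) : EReal) +
            eintegral μ (fun ω => uConj u (lam * (Q0.rnDeriv μ ω).toReal)))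
    have hsup_ge : ((∫ ω, Y ω * Z ω ∂μ : ℝ) : EReal) ≤
        ⨆ lam ∈ Set.Ioi (0 : ℝ),
          ((1 / lam : ℝ) : EReal) *
            (((u0 : ℝ) : EReal) +
              eintegral μ (fun ω => uConj u (lam * (Q0.rnDeriv μ ω).toReal))) := by
      rw [← hvalue]
      exact le_iSup₂ (f := fun lam (_ : lam ∈ Set.Ioi (0:ℝ)) =>
        ((1 / lam : ℝ) : EReal) *
          (((u0 : ℝ) : EReal) +
            eintegral μ (fun ω => uConj u (lam * (Q0.rnDeriv μ ω).toReal)))) lam0 hlam0_pos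
    have hms_eq : (ms : EReal) = ((∫ ω, -(X ω) ∂Q0 : ℝ) : EReal) +
        ((∫ ω, Y ω * Z ω ∂μ : ℝ) : EReal) := by
      rw [hQ0negX, ← EReal.coe_add]
      refine congrArg _ ?_
      rw [hYZ]; ring
    rw [hms_eq]
    exact add_le_add le_rfl hsup_ge
  · -- weak duality
    refine iSup_le fun Q => ?_
    obtain ⟨Q, hQprob, hQac⟩ := Q
    haveI := hQprob
    show ((∫ ω, -(X ω) ∂Q : ℝ) : EReal) +
        (⨆ lam ∈ Set.Ioi (0 : ℝ),
          ((1 / lam : ℝ) : EReal) *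
            (((u0 : ℝ) : EReal) +
              eintegral μ (fun ω => uConj u (lam * (Q.rnDeriv μ ω).toReal)))) ≤ (ms : EReal)
    have hfeas : u0 ≤ ∫ ω, u (X ω + ms) ∂μ := hgms.ge
    have hsup : (⨆ lam ∈ Set.Ioi (0 : ℝ),
        ((1 / lam : ℝ) : EReal) *
          (((u0 : ℝ) : EReal) +
            eintegral μ (fun ω => uConj u (lam * (Q.rnDeriv μ ω).toReal))))
        ≤ ((ms + ∫ ω, X ω ∂Q : ℝ) : EReal) :=
      iSup₂_le fun lam hlam => weak_dual hm hC hQac hlam hfeas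
    calc ((∫ ω, -(X ω) ∂Q : ℝ) : EReal) + _
        ≤ ((∫ ω, -(X ω) ∂Q : ℝ) : EReal) + ((ms + ∫ ω, X ω ∂Q : ℝ) : EReal) :=
          add_le_add le_rfl hsup
      _ = (ms : EReal) := by
          rw [integral_neg, ← EReal.coe_add]
          refine congrArg _ ?_
          ring

/-- Lower-semicontinuity helper. -/
private lemma lsc_aux {α : Type*} [TopologicalSpace α] {φ : α → ℝ} (hφ : Continuous φ)
    (c : EReal) : LowerSemicontinuous fun x => ((φ x : ℝ) : EReal) + c := by
  induction c using EReal.rec with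
  | bot =>
      have heq : (fun x => ((φ x : ℝ) : EReal) + ⊥) = fun _ => (⊥ : EReal) :=
        funext fun x => EReal.add_bot _
      rw [heq]
      exact lowerSemicontinuous_const
  | coe c =>
      have heq : (fun x => ((φ x : ℝ) : EReal) + (c : EReal))
          = fun x => ((φ x + c : ℝ) : EReal) := funext fun x => (EReal.coe_add _ _).symm
      rw [heq]
      exact (continuous_coe_real_ereal.comp (hφ.add continuous_const)).lowerSemicontinuous
  | top =>
      have heq : (fun x => ((φ x : ℝ) : EReal) + ⊤) = fun _ => (⊤ : EReal) :=
        funext fun x => EReal.coe_add_top _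
      rw [heq]
      exact lowerSemicontinuous_const

end Statement19Main

/-- convexity, `σ(L^∞,L^1)`-lower semicontinuity and dual representation of
the utility-based risk measure `ρ_u` on `L^∞`. -/
theorem statement19 {μ : Measure Ω} [IsProbabilityMeasure μ]
    (u : ℝ → ℝ) (u0 : ℝ)
    (hu_nonconst : ∃ x y : ℝ, u x ≠ u y)
    (hu_conc : ConcaveOn ℝ Set.univ u)
    (hu_mono : Monotone u)
    (hu0 : ∃ x : ℝ, u0 < u x) :
    -- convexity (the epigraph of `ρ_u` over `L^∞` is convex)
    (Convex ℝ {p : (Ω →ₘ[μ] ℝ) × ℝ | EssBdd p.1 ∧ rhoU μ u u0 p.1 ≤ ((p.2 : ℝ) : EReal)}) ∧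
    -- `σ(L^∞,L^1)`-lower semicontinuity
    (@LowerSemicontinuous (↥{f : Ω →ₘ[μ] ℝ | EssBdd f}) EReal
        (wtop1 {f : Ω →ₘ[μ] ℝ | EssBdd f} {f : Ω →ₘ[μ] ℝ | Integrable f μ}) _
        (fun X : ↥{f : Ω →ₘ[μ] ℝ | EssBdd f} => rhoU μ u u0 (X : Ω →ₘ[μ] ℝ))) ∧
    -- dual representation
    (∀ X : Ω →ₘ[μ] ℝ, EssBdd X →
      rhoU μ u u0 X =
        ⨆ Q : {Q : Measure Ω // IsProbabilityMeasure Q ∧ Q ≪ μ},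
          (((∫ ω, -(X ω) ∂(Q : Measure Ω)) : ℝ) : EReal) +
            ⨆ lam ∈ Set.Ioi (0 : ℝ),
              ((1 / lam : ℝ) : EReal) *
                (((u0 : ℝ) : EReal) +
                  eintegral μ (fun ω =>
                    uConj u (lam * ((Q : Measure Ω).rnDeriv μ ω).toReal)))) := by
  refine ⟨?_, ?_, fun X hX => dual_rep hu_nonconst hu_conc hu_mono hu0 hX⟩
  · -- convexity
    rintro ⟨X, r⟩ ⟨hX, hXr⟩ ⟨Y, s⟩ ⟨hY, hYs⟩ a b ha hb hab
    obtain ⟨C1, hC1⟩ := hX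
    obtain ⟨C2, hC2⟩ := hY
    have hcomb : EssBdd (a • X + b • Y) := by
      refine ⟨|a| * C1 + |b| * C2, ?_⟩
      filter_upwards [hC1, hC2, AEEqFun.coeFn_add (a • X) (b • Y),
        AEEqFun.coeFn_smul a X, AEEqFun.coeFn_smul b Y] with ω h1 h2 h3 h4 h5
      rw [h3, Pi.add_apply, h4, h5, Pi.smul_apply, Pi.smul_apply, smul_eq_mul, smul_eq_mul]
      calc |a * X ω + b * Y ω| ≤ |a * X ω| + |b * Y ω| := abs_add_le _ _
        _ = |a| * |X ω| + |b| * |Y ω| := by rw [abs_mul, abs_mul]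
        _ ≤ |a| * C1 + |b| * C2 := by
            have ha' := abs_nonneg a
            have hb' := abs_nonneg b
            have := mul_le_mul_of_nonneg_left h1 ha'
            have := mul_le_mul_of_nonneg_left h2 hb'
            linarith
    have hgoal_pt : a • ((X, r) : (Ω →ₘ[μ] ℝ) × ℝ) + b • (Y, s)
        = (a • X + b • Y, a * r + b * s) := by
      simp [Prod.ext_iff, smul_eq_mul]
    rw [Set.mem_setOf_eq, hgoal_pt]
    refine ⟨hcomb, ?_⟩
    rw [rhoU_le_coe_iff hu_mono hu_conc hu_nonconst hu0 hcomb]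
    have hXfeas : u0 ≤ ∫ ω, u (X ω + r) ∂μ :=
      (rhoU_le_coe_iff hu_mono hu_conc hu_nonconst hu0 ⟨C1, hC1⟩ r).1 hXr
    have hYfeas : u0 ≤ ∫ ω, u (Y ω + s) ∂μ :=
      (rhoU_le_coe_iff hu_mono hu_conc hu_nonconst hu0 ⟨C2, hC2⟩ s).1 hYs
    have hint1 := integrable_u_comp (μ := μ) hu_mono hC1
    have hint2 := integrable_u_comp (μ := μ) hu_mono hC2
    obtain ⟨Cc, hCc⟩ := hcomb
    have hintc := integrable_u_comp (μ := μ) hu_mono hCc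
    have key : ∀ᵐ ω ∂μ, a * u (X ω + r) + b * u (Y ω + s)
        ≤ u ((a • X + b • Y) ω + (a * r + b * s)) := by
      filter_upwards [AEEqFun.coeFn_add (a • X) (b • Y), AEEqFun.coeFn_smul a X,
        AEEqFun.coeFn_smul b Y] with ω h3 h4 h5
      rw [h3, Pi.add_apply, h4, h5, Pi.smul_apply, Pi.smul_apply, smul_eq_mul, smul_eq_mul]
      have hcc := hu_conc.2 (Set.mem_univ (X ω + r)) (Set.mem_univ (Y ω + s)) ha hb hab
      simp only [smul_eq_mul] at hcc
      have e : a * (X ω + r) + b * (Y ω + s) = a * X ω + b * Y ω + (a * r + b * s) := by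
        ring
      rw [e] at hcc
      exact hcc
    have hA : Integrable (fun ω => a * u (X ω + r)) μ := (hint1 r).const_mul a
    have hB : Integrable (fun ω => b * u (Y ω + s)) μ := (hint2 s).const_mul b
    have hAB : Integrable (fun ω => a * u (X ω + r) + b * u (Y ω + s)) μ := hA.add hB
    have h6 := integral_mono_ae hAB (hintc (a * r + b * s)) key
    rw [integral_add hA hB, integral_const_mul, integral_const_mul] at h6
    show u0 ≤ ∫ ω, u ((a • X + b • Y) ω + (a * r + b * s)) ∂μ
    have hsum : a * u0 + b * u0 = u0 := by rw [← add_mul, hab, one_mul]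
    have h7 := mul_le_mul_of_nonneg_left hXfeas ha
    have h8 := mul_le_mul_of_nonneg_left hYfeas hb
    linarith
  · -- lower semicontinuity
    letI T : TopologicalSpace ↥{f : Ω →ₘ[μ] ℝ | EssBdd f} :=
      wtop1 {f : Ω →ₘ[μ] ℝ | EssBdd f} {f : Ω →ₘ[μ] ℝ | Integrable f μ}
    show LowerSemicontinuous
      fun X : ↥{f : Ω →ₘ[μ] ℝ | EssBdd f} => rhoU μ u u0 (X : Ω →ₘ[μ] ℝ)
    have hWQmeas : ∀ Q : {Q : Measure Ω // IsProbabilityMeasure Q ∧ Q ≪ μ},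
        Measurable fun ω => ((Q : Measure Ω).rnDeriv μ ω).toReal :=
      fun Q => (Measure.measurable_rnDeriv _ _).ennreal_toReal
    set WQ : {Q : Measure Ω // IsProbabilityMeasure Q ∧ Q ≪ μ} → (Ω →ₘ[μ] ℝ) := fun Q =>
      AEEqFun.mk (fun ω => ((Q : Measure Ω).rnDeriv μ ω).toReal)
        (hWQmeas Q).aestronglyMeasurable with hWQdef
    have hWQcoe : ∀ Q, ⇑(WQ Q) =ᵐ[μ] fun ω => ((Q : Measure Ω).rnDeriv μ ω).toReal := by
      intro Q
      rw [hWQdef]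
      exact AEEqFun.coeFn_mk _ _
    have hWQmem : ∀ Q, (WQ Q) ∈ {f : Ω →ₘ[μ] ℝ | Integrable f μ} := by
      intro Q
      haveI := Q.2.1
      have h1 : Integrable (fun ω => ((Q : Measure Ω).rnDeriv μ ω).toReal) μ :=
        Measure.integrable_toReal_rnDeriv
      exact h1.congr (hWQcoe Q).symm
    have hFeq : (fun X : ↥{f : Ω →ₘ[μ] ℝ | EssBdd f} => rhoU μ u u0 (X : Ω →ₘ[μ] ℝ))
        = fun X : ↥{f : Ω →ₘ[μ] ℝ | EssBdd f} =>
          ⨆ Q : {Q : Measure Ω // IsProbabilityMeasure Q ∧ Q ≪ μ},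
            ((-(ip (X : Ω →ₘ[μ] ℝ) (WQ Q)) : ℝ) : EReal) +
              ⨆ lam ∈ Set.Ioi (0 : ℝ),
                ((1 / lam : ℝ) : EReal) *
                  (((u0 : ℝ) : EReal) +
                    eintegral μ (fun ω =>
                      uConj u (lam * ((Q : Measure Ω).rnDeriv μ ω).toReal))) := by
      funext X
      rw [dual_rep hu_nonconst hu_conc hu_mono hu0 X.2]
      refine iSup_congr fun Q => ?_
      haveI := Q.2.1
      have hip : ip (X : Ω →ₘ[μ] ℝ) (WQ Q)
          = ∫ ω, (X : Ω →ₘ[μ] ℝ) ω ∂(Q : Measure Ω) := by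
        have h1 : ∫ ω, (X : Ω →ₘ[μ] ℝ) ω * (WQ Q) ω ∂μ
            = ∫ ω, ((Q : Measure Ω).rnDeriv μ ω).toReal • (X : Ω →ₘ[μ] ℝ) ω ∂μ := by
          refine integral_congr_ae ?_
          filter_upwards [hWQcoe Q] with ω hω
          rw [hω, smul_eq_mul, mul_comm]
        exact h1.trans (integral_rnDeriv_smul Q.2.2)
      have h2 : ∫ ω, -((X : Ω →ₘ[μ] ℝ) ω) ∂(Q : Measure Ω)
          = -(ip (X : Ω →ₘ[μ] ℝ) (WQ Q)) := by
        rw [integral_neg, hip]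
      rw [h2]
    rw [hFeq]
    refine lowerSemicontinuous_iSup fun Q => ?_
    have hι : Continuous (fun X : ↥{f : Ω →ₘ[μ] ℝ | EssBdd f} =>
        fun Z : ↥{f : Ω →ₘ[μ] ℝ | Integrable f μ} =>
          ip (X : Ω →ₘ[μ] ℝ) (Z : Ω →ₘ[μ] ℝ)) := continuous_induced_dom
    have hφ : Continuous (fun X : ↥{f : Ω →ₘ[μ] ℝ | EssBdd f} =>
        -(ip (X : Ω →ₘ[μ] ℝ) (WQ Q))) :=
      ((continuous_apply
        (⟨WQ Q, hWQmem Q⟩ : ↥{f : Ω →ₘ[μ] ℝ | Integrable f μ})).comp hι).neg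
    exact lsc_aux hφ _

end SystemicRisk
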